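/- Let X be a Banach space with the Dunford–Pettis property (i.e., every relatively weakly compact subset of X* is relatively Mackey compact, equivalently every weakly compact operator from X is completely continuous). Then for every nonempty bounded set A ⊆ X*, χ_m(A) ≤ 2·ω(A). -/

import Mathlib

set_option maxHeartbeats 1000000


open Filter Metric Set NormedSpace
open scoped Topology

noncomputable section

/-- The non-symmetrized Hausdorff distance `d̂(A,B) = sup_{a ∈ A} dist(a, B)`,
formulated with an abstract distance function `d`. -/
def hdD {Z : Type*} (d : Z → Z → ℝ) (A B : Set Z) : ℝ :=
  ⨆ a : A, ⨅ b : B, d a b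

/-- `χ₀(A) = inf { d̂(A,F) : F ⊆ A finite nonempty }`. -/
def chi0D {Z : Type*} (d : Z → Z → ℝ) (A : Set Z) : ℝ :=
  sInf {r | ∃ F : Set Z, F ⊆ A ∧ F.Finite ∧ F.Nonempty ∧ r = hdD d A F}

/-- A subset of a normed space is weakly compact if it is compact in the weak topology. -/
def IsWeaklyCompact (𝕜 : Type*) [RCLike 𝕜] {Z : Type*} [NormedAddCommGroup Z]
    [NormedSpace 𝕜 Z] (K : Set Z) : Prop :=
  IsCompact (toWeakSpace 𝕜 Z '' K)

/-- The de Blasi measure of weak non-compactness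
`ω(A) = inf { d̂(A,K) : K weakly compact nonempty }`. -/
def deBlasiOmega (𝕜 : Type*) [RCLike 𝕜] {Z : Type*} [NormedAddCommGroup Z]
    [NormedSpace 𝕜 Z] (A : Set Z) : ℝ :=
  sInf {r | ∃ K : Set Z, K.Nonempty ∧ IsWeaklyCompact 𝕜 K ∧ r = hdD dist A K}

/-- The measure of Mackey non-compactness of a bounded set `A ⊆ X*`:
`χ_m(A) = sup { χ₀(A|_L) : L ⊆ B_X weakly compact }`, where `A|_L ⊆ ℓ∞(L)`
carries the supremum distance. `χ_m(A) = 0` iff `A` is relatively Mackey compact. -/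
def chiMackey (𝕜 : Type*) [RCLike 𝕜] {X : Type*} [NormedAddCommGroup X] [NormedSpace 𝕜 X]
    (A : Set (StrongDual 𝕜 X)) : ℝ :=
  sSup {r | ∃ L : Set X, L ⊆ closedBall (0 : X) 1 ∧ IsWeaklyCompact 𝕜 L ∧
    r = chi0D (fun u v : ↥L → 𝕜 => ⨆ y : L, ‖u y - v y‖)
      ((fun φ : StrongDual 𝕜 X => fun y : L => φ (y : X)) '' A)}

/-! ### Auxiliary lemmas -/

section Aux

variable {𝕜 : Type*} [RCLike 𝕜] {X : Type*} [NormedAddCommGroup X] [NormedSpace 𝕜 X]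

/-- Restriction of a functional to a subset. -/
def ResMap (𝕜 : Type*) [RCLike 𝕜] {X : Type*} [NormedAddCommGroup X] [NormedSpace 𝕜 X]
    (L : Set X) : StrongDual 𝕜 X → (↥L → 𝕜) := fun φ : StrongDual 𝕜 X => fun y : L => φ (y : X)

/-- The sup-distance on `↥L → 𝕜`. -/
def dsup (𝕜 : Type*) [RCLike 𝕜] {X : Type*} (L : Set X) [Norm 𝕜] (u v : ↥L → 𝕜) : ℝ :=
  ⨆ y : L, ‖u y - v y‖

lemma dsup_nonneg {L : Set X} (u v : ↥L → 𝕜) : 0 ≤ dsup 𝕜 L u v :=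
  Real.iSup_nonneg fun _ => norm_nonneg _

lemma dsup_comm {L : Set X} (u v : ↥L → 𝕜) : dsup 𝕜 L u v = dsup 𝕜 L v u := by
  unfold dsup
  simp only [norm_sub_rev]

lemma res_norm_le {L : Set X} (hL : L ⊆ closedBall (0 : X) 1) (φ ψ : StrongDual 𝕜 X) (y : L) :
    ‖ResMap 𝕜 L φ y - ResMap 𝕜 L ψ y‖ ≤ ‖φ - ψ‖ := by
  have h1 : ‖(φ - ψ) (y : X)‖ ≤ ‖φ - ψ‖ * ‖(y : X)‖ := (φ - ψ).le_opNorm _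
  have hy : ‖(y : X)‖ ≤ 1 := mem_closedBall_zero_iff.mp (hL y.2)
  have h2 : ‖φ - ψ‖ * ‖(y : X)‖ ≤ ‖φ - ψ‖ * 1 :=
    mul_le_mul_of_nonneg_left hy (norm_nonneg _)
  have : ResMap 𝕜 L φ y - ResMap 𝕜 L ψ y = (φ - ψ) (y : X) := by
    simp [ResMap]
  rw [this]
  calc ‖(φ - ψ) (y : X)‖ ≤ ‖φ - ψ‖ * ‖(y : X)‖ := h1
    _ ≤ ‖φ - ψ‖ * 1 := h2
    _ = ‖φ - ψ‖ := mul_one _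

lemma bddAbove_res {L : Set X} (hL : L ⊆ closedBall (0 : X) 1) (φ ψ : StrongDual 𝕜 X) :
    BddAbove (Set.range fun y : L => ‖ResMap 𝕜 L φ y - ResMap 𝕜 L ψ y‖) := by
  refine ⟨‖φ - ψ‖, ?_⟩
  rintro x ⟨y, rfl⟩
  exact res_norm_le hL φ ψ y

lemma dsup_res_le {L : Set X} (hL : L ⊆ closedBall (0 : X) 1) (φ ψ : StrongDual 𝕜 X) :
    dsup 𝕜 L (ResMap 𝕜 L φ) (ResMap 𝕜 L ψ) ≤ ‖φ - ψ‖ :=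
  Real.iSup_le (fun y => res_norm_le hL φ ψ y) (norm_nonneg _)

lemma dsup_triangle_res {L : Set X} (hL : L ⊆ closedBall (0 : X) 1) (φ χ ψ : StrongDual 𝕜 X) :
    dsup 𝕜 L (ResMap 𝕜 L φ) (ResMap 𝕜 L ψ) ≤
      dsup 𝕜 L (ResMap 𝕜 L φ) (ResMap 𝕜 L χ) + dsup 𝕜 L (ResMap 𝕜 L χ) (ResMap 𝕜 L ψ) := by
  refine Real.iSup_le (fun y => ?_) (add_nonneg (dsup_nonneg _ _) (dsup_nonneg _ _))
  have h1 : ResMap 𝕜 L φ y - ResMap 𝕜 L ψ y =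
      (ResMap 𝕜 L φ y - ResMap 𝕜 L χ y) + (ResMap 𝕜 L χ y - ResMap 𝕜 L ψ y) := by ring
  calc ‖ResMap 𝕜 L φ y - ResMap 𝕜 L ψ y‖
      ≤ ‖ResMap 𝕜 L φ y - ResMap 𝕜 L χ y‖ + ‖ResMap 𝕜 L χ y - ResMap 𝕜 L ψ y‖ := by
        rw [h1]; exact norm_add_le _ _
    _ ≤ dsup 𝕜 L (ResMap 𝕜 L φ) (ResMap 𝕜 L χ) + dsup 𝕜 L (ResMap 𝕜 L χ) (ResMap 𝕜 L ψ) :=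
        add_le_add (le_ciSup (bddAbove_res hL φ χ) y) (le_ciSup (bddAbove_res hL χ ψ) y)

lemma hdD_nonneg' {Z : Type*} {d : Z → Z → ℝ} (hd : ∀ a b, 0 ≤ d a b) (A B : Set Z) :
    0 ≤ hdD d A B :=
  Real.iSup_nonneg fun _ => Real.iInf_nonneg fun _ => hd _ _

lemma iInf_d_le {Z : Type*} {d : Z → Z → ℝ} (hd : ∀ a b, 0 ≤ d a b) (a : Z) {B : Set Z}
    {b : Z} (hb : b ∈ B) : (⨅ b' : B, d a b') ≤ d a b := by
  refine ciInf_le ⟨0, ?_⟩ (⟨b, hb⟩ : B)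
  rintro x ⟨b', rfl⟩
  exact hd _ _

lemma hdD_le' {Z : Type*} {d : Z → Z → ℝ} {A B : Set Z} {C : ℝ} (hd : ∀ a b, 0 ≤ d a b)
    (hC : 0 ≤ C) (h : ∀ a ∈ A, ∃ b ∈ B, d a b ≤ C) : hdD d A B ≤ C := by
  refine Real.iSup_le (fun a => ?_) hC
  obtain ⟨b, hb, hab⟩ := h a a.2
  exact (iInf_d_le hd a hb).trans hab

lemma le_hdD' {Z : Type*} {d : Z → Z → ℝ} {A B : Set Z} {C : ℝ}
    (hC : ∀ a ∈ A, (⨅ b : B, d a b) ≤ C) {a : Z} (ha : a ∈ A) :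
    (⨅ b : B, d a b) ≤ hdD d A B := by
  refine le_ciSup (f := fun a : A => ⨅ b : B, d (a : Z) b) ⟨C, ?_⟩ (⟨a, ha⟩ : A)
  rintro x ⟨a', rfl⟩
  exact hC a' a'.2

lemma chi0D_nonneg' {Z : Type*} {d : Z → Z → ℝ} (hd : ∀ a b, 0 ≤ d a b) (A : Set Z) :
    0 ≤ chi0D d A := by
  refine Real.sInf_nonneg fun r hr => ?_
  obtain ⟨F, _, _, _, rfl⟩ := hr
  exact hdD_nonneg' hd _ _

lemma chi0D_le_hdD' {Z : Type*} {d : Z → Z → ℝ} (hd : ∀ a b, 0 ≤ d a b) {A F : Set Z}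
    (hFA : F ⊆ A) (hfin : F.Finite) (hne : F.Nonempty) : chi0D d A ≤ hdD d A F := by
  refine csInf_le ⟨0, ?_⟩ ⟨F, hFA, hfin, hne, rfl⟩
  rintro r ⟨F', _, _, _, rfl⟩
  exact hdD_nonneg' hd _ _

lemma weakCompact_bdd {𝕜 : Type*} [RCLike 𝕜] {Z : Type*} [NormedAddCommGroup Z]
    [NormedSpace 𝕜 Z] {K : Set Z} (hK : IsWeaklyCompact 𝕜 K) :
    ∃ M : ℝ, 0 ≤ M ∧ ∀ k ∈ K, ‖k‖ ≤ M := by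
  have hpt : ∀ φ : StrongDual 𝕜 Z, ∃ C, ∀ k : K,
      ‖inclusionInDoubleDual 𝕜 Z (k : Z) φ‖ ≤ C := by
    intro φ
    have hcont : Continuous fun w : WeakSpace 𝕜 Z => ((topDualPairing 𝕜 Z).flip) w φ :=
      WeakBilin.eval_continuous _ φ
    have hc : IsCompact ((fun w : WeakSpace 𝕜 Z => ((topDualPairing 𝕜 Z).flip) w φ) ''
        (toWeakSpace 𝕜 Z '' K)) := hK.image hcont
    obtain ⟨C, hCb⟩ := (isBounded_iff_forall_norm_le).mp hc.isBounded
    refine ⟨C, fun k => ?_⟩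
    have : φ (k : Z) ∈ (fun w : WeakSpace 𝕜 Z => ((topDualPairing 𝕜 Z).flip) w φ) ''
        (toWeakSpace 𝕜 Z '' K) := ⟨toWeakSpace 𝕜 Z k, ⟨k, k.2, rfl⟩, rfl⟩
    exact hCb _ this
  obtain ⟨C, hC⟩ := banach_steinhaus (g := fun k : K => inclusionInDoubleDual 𝕜 Z (k : Z)) hpt
  refine ⟨max C 0, le_max_right _ _, fun k hk => ?_⟩
  have h1 : ‖k‖ = ‖inclusionInDoubleDual 𝕜 Z k‖ :=
    ((inclusionInDoubleDualLi 𝕜 (E := Z)).norm_map k).symm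
  rw [h1]
  exact le_trans (hC ⟨k, hk⟩) (le_max_left _ _)

end Aux

/-- If a Banach space `X` has the Dunford–Pettis property (every relatively
weakly compact subset of `X*` is relatively Mackey compact), then every
nonempty bounded `A ⊆ X*` satisfies `χ_m(A) ≤ 2·ω(A)`. -/
theorem chiMackey_le_two_omega_of_DunfordPettis
    {𝕜 : Type*} [RCLike 𝕜] {X : Type*}
    [NormedAddCommGroup X] [NormedSpace 𝕜 X] [CompleteSpace X]
    (hDP : ∀ B : Set (StrongDual 𝕜 X), (∃ K : Set (StrongDual 𝕜 X), B ⊆ K ∧ IsWeaklyCompact 𝕜 K) →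
      chiMackey 𝕜 B = 0) :
    ∀ A : Set (StrongDual 𝕜 X), A.Nonempty → Bornology.IsBounded A →
      chiMackey 𝕜 A ≤ 2 * deBlasiOmega 𝕜 A := by
  intro A hA hAbd
  obtain ⟨N, hN⟩ := isBounded_iff_forall_norm_le.mp hAbd
  obtain ⟨a₀, ha₀⟩ := hA
  -- the ω-set is nonempty and consists of nonnegative numbers
  set Ω : Set ℝ :=
    {r | ∃ K : Set (StrongDual 𝕜 X), K.Nonempty ∧ IsWeaklyCompact 𝕜 K ∧ r = hdD dist A K} with hΩdef
  have hΩne : Ω.Nonempty := by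
    refine ⟨hdD dist A {0}, {0}, singleton_nonempty 0, ?_, rfl⟩
    unfold IsWeaklyCompact
    rw [Set.image_singleton]
    exact isCompact_singleton
  have hΩnonneg : ∀ r ∈ Ω, 0 ≤ r := by
    rintro r ⟨K, _, _, rfl⟩
    exact hdD_nonneg' (fun _ _ => dist_nonneg) _ _
  have hω : deBlasiOmega 𝕜 A = sInf Ω := rfl
  have hωnonneg : 0 ≤ deBlasiOmega 𝕜 A := Real.sInf_nonneg hΩnonneg
  -- main estimate
  refine Real.sSup_le ?_ (by linarith)
  rintro r ⟨L, hLb, hLw, rfl⟩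
  have hr : chi0D (fun u v : ↥L → 𝕜 => ⨆ y : L, ‖u y - v y‖)
      ((fun φ : StrongDual 𝕜 X => fun y : L => φ (y : X)) '' A)
      = chi0D (dsup 𝕜 L) (ResMap 𝕜 L '' A) := rfl
  rw [hr]
  set χ := chi0D (dsup 𝕜 L) (ResMap 𝕜 L '' A) with hχdef
  -- KEY: for every admissible (K, s) we have χ ≤ 2 s
  have key : ∀ s ∈ Ω, χ ≤ 2 * s := by
    rintro s ⟨K, hKne, hKw, rfl⟩
    set s := hdD dist A K with hsdef
    have hs0 : 0 ≤ s := hdD_nonneg' (fun _ _ => dist_nonneg) _ _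
    obtain ⟨M, hM0, hM⟩ := weakCompact_bdd hKw
    obtain ⟨k₀, hk₀⟩ := hKne
    -- the Mackey measure of K vanishes
    have hDPK : chiMackey 𝕜 K = 0 := hDP K ⟨K, subset_rfl, hKw⟩
    -- the set over which chiMackey K takes sSup is bounded above by 2M
    have hSKbdd : BddAbove {r | ∃ L' : Set X, L' ⊆ closedBall (0 : X) 1 ∧ IsWeaklyCompact 𝕜 L' ∧
        r = chi0D (fun u v : ↥L' → 𝕜 => ⨆ y : L', ‖u y - v y‖)
          ((fun φ : StrongDual 𝕜 X => fun y : L' => φ (y : X)) '' K)} := by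
      refine ⟨2 * M, ?_⟩
      rintro r ⟨L', hL'b, _, rfl⟩
      have hrr : chi0D (fun u v : ↥L' → 𝕜 => ⨆ y : L', ‖u y - v y‖)
          ((fun φ : StrongDual 𝕜 X => fun y : L' => φ (y : X)) '' K)
          = chi0D (dsup 𝕜 L') (ResMap 𝕜 L' '' K) := rfl
      rw [hrr]
      refine le_trans (chi0D_le_hdD' (fun _ _ => dsup_nonneg _ _)
        (singleton_subset_iff.mpr (mem_image_of_mem _ hk₀)) (finite_singleton _)
        (singleton_nonempty _)) ?_
      refine hdD_le' (fun _ _ => dsup_nonneg _ _) (by linarith) ?_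
      rintro a ⟨k, hk, rfl⟩
      refine ⟨ResMap 𝕜 L' k₀, mem_singleton _, ?_⟩
      calc dsup 𝕜 L' (ResMap 𝕜 L' k) (ResMap 𝕜 L' k₀) ≤ ‖k - k₀‖ := dsup_res_le hL'b _ _
        _ ≤ ‖k‖ + ‖k₀‖ := norm_sub_le _ _
        _ ≤ M + M := add_le_add (hM k hk) (hM k₀ hk₀)
        _ = 2 * M := by ring
    -- χ₀ of K restricted to L is ≤ 0
    have hχK : chi0D (dsup 𝕜 L) (ResMap 𝕜 L '' K) ≤ 0 := by
      have hmem : chi0D (dsup 𝕜 L) (ResMap 𝕜 L '' K) ∈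
          {r | ∃ L' : Set X, L' ⊆ closedBall (0 : X) 1 ∧ IsWeaklyCompact 𝕜 L' ∧
            r = chi0D (fun u v : ↥L' → 𝕜 => ⨆ y : L', ‖u y - v y‖)
              ((fun φ : StrongDual 𝕜 X => fun y : L' => φ (y : X)) '' K)} :=
        ⟨L, hLb, hLw, rfl⟩
      have := le_csSup hSKbdd hmem
      rw [show sSup {r | ∃ L' : Set X, L' ⊆ closedBall (0 : X) 1 ∧ IsWeaklyCompact 𝕜 L' ∧
            r = chi0D (fun u v : ↥L' → 𝕜 => ⨆ y : L', ‖u y - v y‖)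
              ((fun φ : StrongDual 𝕜 X => fun y : L' => φ (y : X)) '' K)} = chiMackey 𝕜 K from rfl,
        hDPK] at this
      exact this
    -- for every ε > 0, χ ≤ 2 s + 4 ε
    have hstep : ∀ ε : ℝ, 0 < ε → χ ≤ 2 * s + 4 * ε := by
      intro ε hε
      -- find a finite ε-net F ⊆ K|L for K|L
      have hKLne : (ResMap 𝕜 L '' K).Nonempty := ⟨_, mem_image_of_mem _ hk₀⟩
      have hsetne : {r | ∃ F : Set (↥L → 𝕜), F ⊆ ResMap 𝕜 L '' K ∧ F.Finite ∧ F.Nonempty ∧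
          r = hdD (dsup 𝕜 L) (ResMap 𝕜 L '' K) F}.Nonempty :=
        ⟨_, {ResMap 𝕜 L k₀}, singleton_subset_iff.mpr (mem_image_of_mem _ hk₀),
          finite_singleton _, singleton_nonempty _, rfl⟩
      have hlt : chi0D (dsup 𝕜 L) (ResMap 𝕜 L '' K) < ε := lt_of_le_of_lt hχK hε
      obtain ⟨rF, hrFmem, hrFlt⟩ := exists_lt_of_csInf_lt hsetne hlt
      obtain ⟨F, hFK, hFfin, hFne, rfl⟩ := hrFmem
      -- every element of A|L is within s + 2ε of F
      have hnet : ∀ aq ∈ A, ∃ f ∈ F, dsup 𝕜 L (ResMap 𝕜 L aq) f ≤ s + 2 * ε := by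
        intro aq haq
        -- distance from aq to K is at most s
        have hd1 : (⨅ k : K, dist aq (k : StrongDual 𝕜 X)) ≤ s := by
          refine le_hdD' (C := N + ‖k₀‖) ?_ haq
          intro a' ha'
          refine (iInf_d_le (d := fun a b : StrongDual 𝕜 X => dist a b) (fun _ _ => dist_nonneg) a' hk₀).trans ?_
          rw [dist_eq_norm]
          exact (norm_sub_le _ _).trans (add_le_add_left (hN a' ha') _)
        haveI : Nonempty ↥K := ⟨⟨k₀, hk₀⟩⟩
        obtain ⟨k, hk⟩ := exists_lt_of_ciInf_lt (lt_of_le_of_lt hd1 (by linarith : s < s + ε))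
        -- distance from k|L to F is less than ε
        have hd2 : (⨅ f : F, dsup 𝕜 L (ResMap 𝕜 L (k : StrongDual 𝕜 X)) (f : ↥L → 𝕜)) <
            ε := by
          refine lt_of_le_of_lt ?_ hrFlt
          refine le_hdD' (C := 2 * M + ‖aq‖ + N) ?_ (mem_image_of_mem _ k.2)
          rintro a' ⟨k', hk', rfl⟩
          obtain ⟨f₀, hf₀F⟩ := hFne
          obtain ⟨kf₀, hkf₀, hkf₀eq⟩ := hFK hf₀F
          refine le_trans (iInf_d_le (d := dsup 𝕜 L) (fun _ _ => dsup_nonneg _ _)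
            (ResMap 𝕜 L k') hf₀F) ?_
          rw [← hkf₀eq]
          calc dsup 𝕜 L (ResMap 𝕜 L k') (ResMap 𝕜 L kf₀) ≤ ‖k' - kf₀‖ := dsup_res_le hLb _ _
            _ ≤ ‖k'‖ + ‖kf₀‖ := norm_sub_le _ _
            _ ≤ M + M := add_le_add (hM k' hk') (hM kf₀ hkf₀)
            _ ≤ 2 * M + ‖aq‖ + N := by
                have := norm_nonneg aq
                have h0N : 0 ≤ N := le_trans (norm_nonneg a₀) (hN a₀ ha₀)
                linarith
        haveI : Nonempty ↥F := hFne.to_subtype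
        obtain ⟨f, hf⟩ := exists_lt_of_ciInf_lt hd2
        obtain ⟨kf, hkf, hkfeq⟩ := hFK f.2
        refine ⟨f, f.2, ?_⟩
        have htri : dsup 𝕜 L (ResMap 𝕜 L aq) (f : ↥L → 𝕜) ≤
            dsup 𝕜 L (ResMap 𝕜 L aq) (ResMap 𝕜 L (k : StrongDual 𝕜 X)) +
            dsup 𝕜 L (ResMap 𝕜 L (k : StrongDual 𝕜 X)) (f : ↥L → 𝕜) := by
          rw [← hkfeq]
          exact dsup_triangle_res hLb aq k kf
        have h3 : dsup 𝕜 L (ResMap 𝕜 L aq) (ResMap 𝕜 L (k : StrongDual 𝕜 X)) ≤ s + ε := by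
          refine (dsup_res_le hLb _ _).trans ?_
          rw [← dist_eq_norm]
          exact le_of_lt hk
        linarith [htri, h3, le_of_lt hf]
      -- build a finite net inside A|L via selection
      classical
      set g : (↥L → 𝕜) → (↥L → 𝕜) := fun f =>
        if h : ∃ a ∈ ResMap 𝕜 L '' A, dsup 𝕜 L a f ≤ s + 2 * ε then h.choose
        else ResMap 𝕜 L a₀ with hgdef
      have hgmem : ∀ f, g f ∈ ResMap 𝕜 L '' A := by
        intro f
        by_cases h : ∃ a ∈ ResMap 𝕜 L '' A, dsup 𝕜 L a f ≤ s + 2 * ε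
        · rw [hgdef]; simp only [h, dif_pos]
          exact h.choose_spec.1
        · rw [hgdef]; simp only [h, dif_neg, not_false_iff]
          exact mem_image_of_mem _ ha₀
      have hgprop : ∀ f, (∃ a ∈ ResMap 𝕜 L '' A, dsup 𝕜 L a f ≤ s + 2 * ε) →
          dsup 𝕜 L (g f) f ≤ s + 2 * ε := by
        intro f h
        rw [hgdef]; simp only [h, dif_pos]
        exact h.choose_spec.2
      set F' : Set (↥L → 𝕜) := g '' F with hF'def
      have hF'A : F' ⊆ ResMap 𝕜 L '' A := by
        rintro x ⟨f, _, rfl⟩; exact hgmem f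
      -- every element of A|L is within 2s+4ε of F'
      have hnet' : ∀ a ∈ ResMap 𝕜 L '' A, ∃ b ∈ F', dsup 𝕜 L a b ≤ 2 * s + 4 * ε := by
        rintro a ⟨aq, haq, rfl⟩
        obtain ⟨f, hfF, hfle⟩ := hnet aq haq
        have hex : ∃ a' ∈ ResMap 𝕜 L '' A, dsup 𝕜 L a' f ≤ s + 2 * ε :=
          ⟨ResMap 𝕜 L aq, mem_image_of_mem _ haq, hfle⟩
        refine ⟨g f, mem_image_of_mem _ hfF, ?_⟩
        obtain ⟨a', ha', ha'eq⟩ := hgmem f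
        obtain ⟨kf, hkf, hkfeq⟩ := hFK hfF
        have htri : dsup 𝕜 L (ResMap 𝕜 L aq) (g f) ≤
            dsup 𝕜 L (ResMap 𝕜 L aq) f + dsup 𝕜 L f (g f) := by
          rw [← ha'eq, ← hkfeq]
          exact dsup_triangle_res hLb aq kf a'
        have h4 : dsup 𝕜 L f (g f) = dsup 𝕜 L (g f) f := dsup_comm _ _
        have h5 := hgprop f hex
        linarith [htri]
      have hF'fin : F'.Finite := hFfin.image _
      have hF'ne : F'.Nonempty := hFne.image _
      refine le_trans (chi0D_le_hdD' (fun _ _ => dsup_nonneg _ _) hF'A hF'fin hF'ne) ?_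
      exact hdD_le' (fun _ _ => dsup_nonneg _ _) (by linarith) hnet'
    -- conclude χ ≤ 2 s
    by_contra hcon
    push_neg at hcon
    have := hstep ((χ - 2 * s) / 8) (by linarith)
    linarith
  -- conclude: χ ≤ 2 sInf Ω
  have hhalf : χ / 2 ≤ sInf Ω := le_csInf hΩne fun s hs => by linarith [key s hs]
  rw [hω]
  linarith
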